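/- Define f : ℝ² × ℝ → ℝ² by f(x,t) = ((−6−t³)x₁ + sin x₁, 5x₁ + (−4−t³)x₂ + sin x₂) (i.e. the system of Example 1 with b = 5 and φ(t) = −6−t³). Let δ : ℝ → ℝ² be continuous with ‖δ(t)‖/t³ → 0 as t → ∞ (‖δ(t)‖ = o(t³)). Then every differentiable x : [0,∞) → ℝ² satisfying x'(t) = f(x(t),t) + δ(t) for all t ≥ 0 converges to (0,0) as t → ∞; in particular the system is globally incrementally stable and the origin of the nominal system remains attractive even under unbounded perturbations δ. -/

import Mathlib

open Filter Topology

open scoped RealInnerProductSpace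

/-- The vector field of Example 1 with `b = 5` and `φ(t) = -6 - t³`:
`f(x,t) = ((-6-t³)x₁ + sin x₁, 5x₁ + (-4-t³)x₂ + sin x₂)`. -/
noncomputable def fExample19 (x : EuclideanSpace ℝ (Fin 2)) (t : ℝ) :
    EuclideanSpace ℝ (Fin 2) :=
  (WithLp.equiv 2 (Fin 2 → ℝ)).symm
    ![(-6 - t ^ 3) * x 0 + Real.sin (x 0),
      5 * x 0 + (-4 - t ^ 3) * x 1 + Real.sin (x 1)]

noncomputable def exAlpha (t : ℝ) : ℝ := t / 2 + t ^ 4 / 4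

lemma exAlpha_hasDerivAt (t : ℝ) : HasDerivAt exAlpha (1 / 2 + t ^ 3) t := by
  have h := ((hasDerivAt_id t).div_const 2).add ((hasDerivAt_pow 4 t).div_const 4)
  exact h.congr_deriv (Eq.symm (by
  push_cast
  ring))

lemma exAlpha_cont : Continuous exAlpha := by
  unfold exAlpha; fun_prop

lemma mul_sin_le_sq (a : ℝ) : a * Real.sin a ≤ a ^ 2 := by
  have h1 : a * Real.sin a ≤ |a * Real.sin a| := le_abs_self _
  have h2 : |a * Real.sin a| = |a| * |Real.sin a| := abs_mul _ _
  have h3 : |Real.sin a| ≤ |a| := Real.abs_sin_le_abs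
  nlinarith [abs_nonneg a, sq_abs a]

lemma fExample19_inner_bound (v : EuclideanSpace ℝ (Fin 2)) (t : ℝ) :
    ⟪v, fExample19 v t⟫ ≤ -(1 / 2 + t ^ 3) * ‖v‖ ^ 2 := by
  have hnorm : ‖v‖ ^ 2 = v 0 ^ 2 + v 1 ^ 2 := by
    rw [EuclideanSpace.norm_sq_eq]
    simp [Fin.sum_univ_two]
  have hinner : ⟪v, fExample19 v t⟫ =
      v 0 * ((-6 - t ^ 3) * v 0 + Real.sin (v 0)) +
      v 1 * (5 * v 0 + (-4 - t ^ 3) * v 1 + Real.sin (v 1)) := by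
    simp [fExample19, PiLp.inner_apply, Fin.sum_univ_two, RCLike.inner_apply,
      ]
    ring
  rw [hinner, hnorm]
  nlinarith [mul_sin_le_sq (v 0), mul_sin_le_sq (v 1), sq_nonneg (v 0 - v 1)]

/-- Example 1. For the perturbed system `ẋ = f(x,t) + δ(t)`
of Example 1 (with `b = 5`, `φ(t) = -6 - t³`) and any continuous perturbation
with `‖δ(t)‖ = o(t³)`, every solution converges to the origin as `t → ∞`. -/
theorem example1_solutions_tendsto_zero (δ : ℝ → EuclideanSpace ℝ (Fin 2))
    (hδ : Continuous δ)
    (hδo : Tendsto (fun t => ‖δ t‖ / t ^ 3) atTop (𝓝 0))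
    (x : ℝ → EuclideanSpace ℝ (Fin 2))
    (hx : ∀ t : ℝ, 0 ≤ t → HasDerivAt x (fExample19 (x t) t + δ t) t) :
    Tendsto x atTop (𝓝 0) := by
  -- the rescaled solution
  set y : ℝ → EuclideanSpace ℝ (Fin 2) := fun t => Real.exp (exAlpha t) • x t with hy
  set g : ℝ → ℝ := fun s => Real.exp (exAlpha s) * ‖δ s‖ with hgdef
  have hgcont : Continuous g := (Real.continuous_exp.comp exAlpha_cont).mul hδ.norm
  have hgnonneg : ∀ s, 0 ≤ g s := fun s =>
    mul_nonneg (Real.exp_pos _).le (norm_nonneg _)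
  -- derivative of y
  have hyd : ∀ t : ℝ, 0 ≤ t → HasDerivAt y
      (((1 / 2 + t ^ 3) * Real.exp (exAlpha t)) • x t +
        Real.exp (exAlpha t) • (fExample19 (x t) t + δ t)) t := by
    intro t ht
    have h := ((exAlpha_hasDerivAt t).exp).smul (hx t ht)
    exact h.congr_deriv (Eq.symm (by
    rw [mul_comm]
    exact add_comm _ _))
  -- the Lyapunov-type function
  set q : ℝ → ℝ := fun t => ⟪y t, y t⟫ + 1 with hqdef
  have hq1 : ∀ t, (1 : ℝ) ≤ q t := fun t => by
    have := real_inner_self_nonneg (x := y t)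
    simp only [hqdef]; linarith
  have hqpos : ∀ t, 0 < q t := fun t => lt_of_lt_of_le one_pos (hq1 t)
  set z : ℝ → ℝ := fun t => Real.sqrt (q t) with hzdef
  have hz1 : ∀ t, (1 : ℝ) ≤ z t := fun t => by
    rw [hzdef]; simpa using Real.one_le_sqrt.mpr (hq1 t)
  have hzpos : ∀ t, 0 < z t := fun t => lt_of_lt_of_le one_pos (hz1 t)
  have hynorm : ∀ t, ‖y t‖ = Real.exp (exAlpha t) * ‖x t‖ := fun t => by
    rw [hy]; simp [norm_smul, Real.abs_exp]
  have hyz : ∀ t, ‖y t‖ ≤ z t := fun t => by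
    show ‖y t‖ ≤ Real.sqrt (⟪y t, y t⟫ + 1)
    rw [real_inner_self_eq_norm_sq]
    calc ‖y t‖ = Real.sqrt (‖y t‖ ^ 2) := by rw [Real.sqrt_sq (norm_nonneg _)]
      _ ≤ _ := Real.sqrt_le_sqrt (by linarith)
  -- key inner product estimate
  have hkey : ∀ t : ℝ, 0 ≤ t →
      ⟪y t, ((1 / 2 + t ^ 3) * Real.exp (exAlpha t)) • x t +
        Real.exp (exAlpha t) • (fExample19 (x t) t + δ t)⟫ ≤ g t * z t := by
    intro t ht
    have e := Real.exp_pos (exAlpha t)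
    rw [hy]
    rw [inner_add_right, real_inner_smul_left, real_inner_smul_left,
      real_inner_smul_right, real_inner_smul_right, inner_add_right]
    have h1 : ⟪x t, fExample19 (x t) t⟫ ≤ -(1 / 2 + t ^ 3) * ‖x t‖ ^ 2 :=
      fExample19_inner_bound (x t) t
    have h2 : ⟪x t, δ t⟫ ≤ ‖x t‖ * ‖δ t‖ := real_inner_le_norm _ _
    have h3 : ⟪x t, x t⟫ = ‖x t‖ ^ 2 := real_inner_self_eq_norm_sq _
    have h4 : Real.exp (exAlpha t) * ‖x t‖ ≤ z t := (hynorm t) ▸ hyz t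
    have h5 : (0 : ℝ) ≤ ‖δ t‖ := norm_nonneg _
    have hgt : g t = Real.exp (exAlpha t) * ‖δ t‖ := rfl
    rw [hgt, h3]
    nlinarith [mul_le_mul_of_nonneg_left h1 (mul_pos e e).le,
      mul_le_mul_of_nonneg_left h2 (mul_pos e e).le,
      mul_le_mul_of_nonneg_right (mul_le_mul_of_nonneg_left h4 h5) e.le]
  -- derivative of z and its bound
  have hqd : ∀ t : ℝ, 0 ≤ t → HasDerivAt q
      (2 * ⟪y t, ((1 / 2 + t ^ 3) * Real.exp (exAlpha t)) • x t +
        Real.exp (exAlpha t) • (fExample19 (x t) t + δ t)⟫) t := by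
    intro t ht
    have h := ((hyd t ht).inner ℝ (hyd t ht)).add_const 1
    exact h.congr_deriv (Eq.symm (by
    rw [real_inner_comm]
    ring))
  have hzd : ∀ t : ℝ, 0 ≤ t → HasDerivAt z
      ((2 * ⟪y t, ((1 / 2 + t ^ 3) * Real.exp (exAlpha t)) • x t +
        Real.exp (exAlpha t) • (fExample19 (x t) t + δ t)⟫) / (2 * z t)) t := by
    intro t ht
    exact (hqd t ht).sqrt (ne_of_gt (hqpos t))
  have hzd_le : ∀ t : ℝ, 0 ≤ t →
      (2 * ⟪y t, ((1 / 2 + t ^ 3) * Real.exp (exAlpha t)) • x t +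
        Real.exp (exAlpha t) • (fExample19 (x t) t + δ t)⟫) / (2 * z t) ≤ g t := by
    intro t ht
    rw [div_le_iff₀ (mul_pos two_pos (hzpos t))]
    have := hkey t ht
    nlinarith [hzpos t, hgnonneg t]
  -- the integral bound function
  set B : ℝ → ℝ := fun t => ∫ s in (0 : ℝ)..t, g s with hBdef
  have hBd : ∀ t : ℝ, HasDerivAt B (g t) t := fun t =>
    (hgcont.integral_hasStrictDerivAt 0 t).hasDerivAt
  -- z t - B t is antitone on [0,∞)
  set F : ℝ → ℝ := fun t => z t - B t with hFdef
  have hFd : ∀ t : ℝ, 0 ≤ t → HasDerivAt F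
      ((2 * ⟪y t, ((1 / 2 + t ^ 3) * Real.exp (exAlpha t)) • x t +
        Real.exp (exAlpha t) • (fExample19 (x t) t + δ t)⟫) / (2 * z t) - g t) t :=
    fun t ht => (hzd t ht).sub (hBd t)
  have hFanti : AntitoneOn F (Set.Ici (0 : ℝ)) := by
    apply antitoneOn_of_deriv_nonpos (convex_Ici 0)
    · intro t ht
      exact ((hFd t ht).continuousAt).continuousWithinAt
    · intro t ht
      rw [interior_Ici] at ht
      exact ((hFd t (le_of_lt ht)).differentiableAt).differentiableWithinAt
    · intro t ht
      rw [interior_Ici] at ht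
      rw [(hFd t (le_of_lt ht)).deriv]
      have := hzd_le t (le_of_lt ht)
      linarith
  have hB0 : B 0 = 0 := by simp [hBdef]
  have hmain : ∀ t : ℝ, 0 ≤ t → ‖x t‖ ≤ Real.exp (-(exAlpha t)) * (z 0 + B t) := by
    intro t ht
    have hF := hFanti (Set.self_mem_Ici) ht ht
    rw [hFdef] at hF
    simp only [hB0, sub_zero] at hF
    have hzt : z t ≤ z 0 + B t := by linarith
    have : ‖y t‖ ≤ z 0 + B t := le_trans (hyz t) hzt
    rw [hynorm t] at this
    rw [Real.exp_neg, inv_mul_eq_div, le_div_iff₀ (Real.exp_pos _)]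
    nlinarith [Real.exp_pos (exAlpha t)]
  -- α → ∞, so exp(-α) → 0
  have hαtop : Tendsto exAlpha atTop atTop := by
    refine tendsto_atTop_mono' atTop ?_ (Tendsto.atTop_div_const two_pos tendsto_id)
    · filter_upwards [eventually_ge_atTop (0 : ℝ)] with t ht
      have : 0 ≤ t ^ 4 / 4 := by positivity
      simp only [exAlpha, id_eq]; linarith
  have hexp0 : Tendsto (fun t => Real.exp (-(exAlpha t))) atTop (𝓝 0) :=
    Real.tendsto_exp_atBot.comp (tendsto_neg_atTop_atBot.comp hαtop)
  -- final ε-argument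
  rw [NormedAddCommGroup.tendsto_nhds_zero]
  intro ε hε
  set ε' : ℝ := ε / 3 with hε'def
  have hε' : 0 < ε' := by positivity
  obtain ⟨T₀, hT₀⟩ := (Metric.tendsto_atTop.mp hδo ε' hε')
  set T : ℝ := max T₀ 1 with hTdef
  have hT1 : (1 : ℝ) ≤ T := le_max_right _ _
  have hT0 : (0 : ℝ) ≤ T := le_trans zero_le_one hT1
  have hδsmall : ∀ s : ℝ, T ≤ s → ‖δ s‖ ≤ ε' * (1 / 2 + s ^ 3) := by
    intro s hs
    have hs1 : (1 : ℝ) ≤ s := le_trans hT1 hs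
    have hs3 : (0 : ℝ) < s ^ 3 := by positivity
    have := hT₀ s (le_trans (le_max_left _ _) hs)
    rw [Real.dist_eq, sub_zero, abs_of_nonneg (div_nonneg (norm_nonneg _) hs3.le)] at this
    rw [div_lt_iff₀ hs3] at this
    nlinarith
  -- constant for the tail estimate
  set C : ℝ := z 0 + B T with hCdef
  have hBT : 0 ≤ B T := intervalIntegral.integral_nonneg hT0 (fun s _ => hgnonneg s)
  have hCpos : 0 < C := by
    have := hzpos 0
    rw [hCdef]; linarith
  -- tail bound on B
  have hBtail : ∀ t : ℝ, T ≤ t → B t ≤ B T + ε' * Real.exp (exAlpha t) := by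
    intro t ht
    have hint1 : IntervalIntegrable g MeasureTheory.volume 0 T :=
      hgcont.intervalIntegrable _ _
    have hint2 : IntervalIntegrable g MeasureTheory.volume T t :=
      hgcont.intervalIntegrable _ _
    have hsplit : B t = B T + ∫ s in T..t, g s := by
      rw [hBdef]
      simp only
      rw [← intervalIntegral.integral_add_adjacent_intervals hint1 hint2]
    rw [hsplit]
    have hcont2 : Continuous fun s : ℝ => ε' * ((1 / 2 + s ^ 3) * Real.exp (exAlpha s)) := by
      have := exAlpha_cont
      fun_prop
    have hmono : (∫ s in T..t, g s) ≤
        ∫ s in T..t, ε' * ((1 / 2 + s ^ 3) * Real.exp (exAlpha s)) := by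
      apply intervalIntegral.integral_mono_on ht hint2 (hcont2.intervalIntegrable _ _)
      intro s hs
      have hδs := hδsmall s hs.1
      rw [hgdef]
      have e := (Real.exp_pos (exAlpha s)).le
      nlinarith
    have heval : (∫ s in T..t, ε' * ((1 / 2 + s ^ 3) * Real.exp (exAlpha s))) =
        ε' * Real.exp (exAlpha t) - ε' * Real.exp (exAlpha T) := by
      have hd : ∀ s ∈ Set.uIcc T t, HasDerivAt (fun u => ε' * Real.exp (exAlpha u))
          (ε' * ((1 / 2 + s ^ 3) * Real.exp (exAlpha s))) s := by
        intro s _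
        have h := ((exAlpha_hasDerivAt s).exp).const_mul ε'
        exact h.congr_deriv (Eq.symm (by
        ring))
      exact intervalIntegral.integral_eq_sub_of_hasDerivAt hd
        (hcont2.intervalIntegrable _ _)
    rw [heval] at hmono
    have : 0 ≤ ε' * Real.exp (exAlpha T) := by positivity
    linarith
  -- finish
  have hev : ∀ᶠ t in atTop, Real.exp (-(exAlpha t)) * C < ε' := by
    have := (hexp0.const_mul C)
    have h2 : Tendsto (fun t => Real.exp (-(exAlpha t)) * C) atTop (𝓝 0) := by
      simpa [mul_comm] using this
    exact (h2.eventually (eventually_lt_nhds hε')).mono (fun t h => by simpa using h)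
  filter_upwards [hev, eventually_ge_atTop T] with t h1 h2
  have ht0 : (0 : ℝ) ≤ t := le_trans hT0 h2
  have hxb := hmain t ht0
  have hBb := hBtail t h2
  have e := (Real.exp_pos (-(exAlpha t))).le
  have hexpmul : Real.exp (-(exAlpha t)) * Real.exp (exAlpha t) = 1 := by
    rw [← Real.exp_add]; simp
  calc ‖x t‖ ≤ Real.exp (-(exAlpha t)) * (z 0 + B t) := hxb
    _ ≤ Real.exp (-(exAlpha t)) * (z 0 + (B T + ε' * Real.exp (exAlpha t))) := by
        apply mul_le_mul_of_nonneg_left _ e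
        linarith
    _ = Real.exp (-(exAlpha t)) * C + ε' * (Real.exp (-(exAlpha t)) * Real.exp (exAlpha t)) := by
        rw [hCdef]; ring
    _ = Real.exp (-(exAlpha t)) * C + ε' := by rw [hexpmul]; ring
    _ < ε' + ε' := by linarith
    _ < ε := by rw [hε'def]; linarith
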